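/- Let (X, μ) be a finite measure space, let ψ : X → ℝ be measurable, and let d > 0, δ > 0, q ≥ 1 satisfy μ({x : ψ(x) ≥ d}) ≥ δ and μ({x : ψ(x) ≤ 0}) ≥ δ. Set T = min(max(ψ,0), d) and M = ∫_X T dμ. Then ∫_X |T − M|^q dμ ≥ d^q · δ^{q+1}. (This is the lower bound ∫|max(ψ,0) − max(ψ−d,0) − M|^{2n/(2n-1)} ω^n ≥ d^{2n/(2n-1)} δ^{1+2n/(2n-1)} in the proof of Lemma 2.6, for a general exponent q.) -/

import Mathlib

open MeasureTheory

/-- On a finite measure space, if `μ({ψ ≥ d}) ≥ δ` and `μ({ψ ≤ 0}) ≥ δ` with `d, δ > 0`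
and `q ≥ 1`, then for `T = min(max(ψ,0), d)` and `M = ∫ T dμ` one has
`∫ |T − M|^q dμ ≥ d^q · δ^(q+1)`. -/
theorem stmt_5 {X : Type*} [MeasurableSpace X] (μ : Measure X) [IsFiniteMeasure μ]
    (ψ : X → ℝ) (hψ : Measurable ψ) (d δ q : ℝ) (hd : 0 < d) (hδ : 0 < δ) (hq : 1 ≤ q)
    (h1 : ENNReal.ofReal δ ≤ μ {x | d ≤ ψ x})
    (h2 : ENNReal.ofReal δ ≤ μ {x | ψ x ≤ 0}) :
    d ^ q * δ ^ (q + 1)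
      ≤ ∫ x, |min (max (ψ x) 0) d - ∫ y, min (max (ψ y) 0) d ∂μ| ^ q ∂μ := by
  set T : X → ℝ := fun x => min (max (ψ x) 0) d with hT
  have hTmeas : Measurable T := (hψ.max measurable_const).min measurable_const
  have hT0 : ∀ x, 0 ≤ T x := fun x => le_min (le_max_right _ _) hd.le
  have hTd : ∀ x, T x ≤ d := fun x => min_le_right _ _
  have hTint : Integrable T μ := by
    refine (integrable_const d).mono' hTmeas.aestronglyMeasurable ?_
    filter_upwards with x
    rw [Real.norm_eq_abs, abs_of_nonneg (hT0 x)]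
    exact hTd x
  set M : ℝ := ∫ y, T y ∂μ with hM
  set A : Set X := {x | d ≤ ψ x} with hA
  set B : Set X := {x | ψ x ≤ 0} with hB
  have hAmeas : MeasurableSet A := measurableSet_le measurable_const hψ
  have hBmeas : MeasurableSet B := measurableSet_le hψ measurable_const
  have hμA : δ ≤ (μ A).toReal := by
    have := ENNReal.toReal_mono (measure_ne_top μ A) h1
    rwa [ENNReal.toReal_ofReal hδ.le] at this
  have hμB : δ ≤ (μ B).toReal := by
    have := ENNReal.toReal_mono (measure_ne_top μ B) h2
    rwa [ENNReal.toReal_ofReal hδ.le] at this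
  -- T = d on A
  have hTA : ∀ x ∈ A, T x = d := by
    intro x hx
    have hx' : d ≤ ψ x := hx
    have : max (ψ x) 0 = ψ x := max_eq_left (hd.le.trans hx')
    simp [hT, this, min_eq_right hx']
  -- T = 0 on B
  have hTB : ∀ x ∈ B, T x = 0 := by
    intro x hx
    have : max (ψ x) 0 = 0 := max_eq_right hx
    simp [hT, this, min_eq_left hd.le]
  -- M ≥ d * δ
  have hMlb : d * δ ≤ M := by
    have h1' : ∫ x in A, T x ∂μ ≤ M :=
      setIntegral_le_integral hTint (Filter.Eventually.of_forall hT0)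
    have h2' : ∫ x in A, T x ∂μ = d * (μ A).toReal := by
      rw [setIntegral_congr_fun hAmeas hTA, setIntegral_const, smul_eq_mul, mul_comm, measureReal_def]
    calc d * δ ≤ d * (μ A).toReal := by nlinarith
      _ = ∫ x in A, T x ∂μ := h2'.symm
      _ ≤ M := h1'
  have hM0 : 0 ≤ M := le_trans (by positivity) hMlb
  -- integrand integrable
  have hfint : Integrable (fun x => |T x - M| ^ q) μ := by
    have hcont : Continuous fun t : ℝ => t ^ q :=
      continuous_iff_continuousAt.2 fun t =>
        Real.continuousAt_rpow_const t q (Or.inr (by linarith))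
    refine (integrable_const ((d + M) ^ q)).mono'
      ((hcont.measurable.comp ((hTmeas.sub measurable_const).abs)).aestronglyMeasurable) ?_
    filter_upwards with x
    rw [Real.norm_eq_abs, abs_of_nonneg (Real.rpow_nonneg (abs_nonneg _) q)]
    refine Real.rpow_le_rpow (abs_nonneg _) ?_ (le_trans zero_le_one hq)
    have := abs_sub_abs_le_abs_sub (T x) M
    rw [abs_sub_comm]
    calc |M - T x| ≤ |M| + |T x| := abs_sub _ _
      _ ≤ M + d := by
          rw [abs_of_nonneg hM0, abs_of_nonneg (hT0 x)]
          linarith [hTd x]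
      _ = d + M := by ring
  -- lower bound via B
  have key : M ^ q * (μ B).toReal ≤ ∫ x, |T x - M| ^ q ∂μ := by
    have hle : ∫ x in B, |T x - M| ^ q ∂μ ≤ ∫ x, |T x - M| ^ q ∂μ :=
      setIntegral_le_integral hfint
        (Filter.Eventually.of_forall fun x => Real.rpow_nonneg (abs_nonneg _) q)
    have heq : ∫ x in B, |T x - M| ^ q ∂μ = M ^ q * (μ B).toReal := by
      rw [setIntegral_congr_fun hBmeas (fun x hx => by
        rw [hTB x hx, zero_sub, abs_neg, abs_of_nonneg hM0]), setIntegral_const,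
        smul_eq_mul, mul_comm, measureReal_def]
    linarith [heq ▸ hle]
  calc d ^ q * δ ^ (q + 1) = (d * δ) ^ q * δ := by
        rw [Real.mul_rpow hd.le hδ.le, Real.rpow_add hδ, Real.rpow_one]; ring
    _ ≤ M ^ q * (μ B).toReal := by
        have h1' : (d * δ) ^ q ≤ M ^ q :=
          Real.rpow_le_rpow (by positivity) hMlb (le_trans zero_le_one hq)
        have : (0:ℝ) ≤ M ^ q := Real.rpow_nonneg hM0 q
        nlinarith [Real.rpow_nonneg (mul_nonneg hd.le hδ.le) q]
    _ ≤ ∫ x, |T x - M| ^ q ∂μ := key
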